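/- For every integer j ≥ 1, ∫_0^∞ k_j(g)²/(g+1) dg ≤ 2·log(1+j), where k_j(g) = 1 - log(g+1)/log(g+1+j). -/

import Mathlib

open MeasureTheory Real Set Filter

/-- The sequence `k_j(g) = 1 - log(g+1)/log(g+1+j)`. -/
noncomputable def kfun (j : ℕ) (g : ℝ) : ℝ :=
  1 - Real.log (g + 1) / Real.log (g + 1 + (j : ℝ))

lemma logD_pos (j : ℕ) (hj : 1 ≤ j) {g : ℝ} (hg : 0 ≤ g) :
    Real.log 2 ≤ Real.log (g + 1 + (j : ℝ)) := by
  apply Real.log_le_log (by norm_num)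
  have : (1:ℝ) ≤ j := by exact_mod_cast hj
  linarith

lemma kfun_nonneg (j : ℕ) (hj : 1 ≤ j) {g : ℝ} (hg : 0 ≤ g) : 0 ≤ kfun j g := by
  have hD : 0 < Real.log (g + 1 + (j : ℝ)) :=
    lt_of_lt_of_le (Real.log_pos (by norm_num)) (logD_pos j hj hg)
  have h1 : Real.log (g + 1) ≤ Real.log (g + 1 + (j : ℝ)) := by
    apply Real.log_le_log (by linarith)
    have : (0:ℝ) ≤ j := Nat.cast_nonneg j
    linarith
  have := div_le_one_of_le₀ h1 hD.le
  simp only [kfun]; linarith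

lemma kfun_le_one (j : ℕ) (hj : 1 ≤ j) {g : ℝ} (hg : 0 ≤ g) : kfun j g ≤ 1 := by
  have hD : 0 < Real.log (g + 1 + (j : ℝ)) :=
    lt_of_lt_of_le (Real.log_pos (by norm_num)) (logD_pos j hj hg)
  have h1 : 0 ≤ Real.log (g + 1) := Real.log_nonneg (by linarith)
  have : 0 ≤ Real.log (g + 1) / Real.log (g + 1 + (j : ℝ)) := div_nonneg h1 hD.le
  simp only [kfun]; linarith

lemma kfun_le (j : ℕ) (hj : 1 ≤ j) {g : ℝ} (hg : 0 ≤ g) :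
    kfun j g ≤ (j : ℝ) / ((g + 1) * Real.log (1 + (j : ℝ))) := by
  have hj1 : (1:ℝ) ≤ j := by exact_mod_cast hj
  have hL : 0 < Real.log (1 + (j : ℝ)) := Real.log_pos (by linarith)
  have hD : 0 < Real.log (g + 1 + (j : ℝ)) :=
    lt_of_lt_of_le (Real.log_pos (by norm_num)) (logD_pos j hj hg)
  have hLD : Real.log (1 + (j : ℝ)) ≤ Real.log (g + 1 + (j : ℝ)) :=
    Real.log_le_log (by linarith) (by linarith)
  have hg1 : (0:ℝ) < g + 1 := by linarith
  have hkey : kfun j g = (Real.log (g + 1 + (j : ℝ)) - Real.log (g + 1)) /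
      Real.log (g + 1 + (j : ℝ)) := by
    simp only [kfun]; field_simp
  have hnum : Real.log (g + 1 + (j : ℝ)) - Real.log (g + 1) ≤ (j : ℝ) / (g + 1) := by
    rw [← Real.log_div (by linarith) (by linarith)]
    have := Real.log_le_sub_one_of_pos (show (0:ℝ) < (g + 1 + (j : ℝ)) / (g + 1) from
      div_pos (by linarith) hg1)
    have heq : (g + 1 + (j : ℝ)) / (g + 1) - 1 = (j : ℝ) / (g + 1) := by
      field_simp
      ring
    linarith
  rw [hkey, ← div_div]
  exact div_le_div₀ (div_nonneg (by linarith) hg1.le) hnum hL hLD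

lemma integral_I1 (j : ℕ) :
    ∫ x in Ioc (0:ℝ) (j:ℝ), (x + 1)⁻¹ = Real.log ((j:ℝ) + 1) := by
  have hj0 : (0:ℝ) ≤ j := Nat.cast_nonneg j
  rw [← intervalIntegral.integral_of_le hj0]
  have : (∫ x in (0:ℝ)..(j:ℝ), (x + 1)⁻¹) = ∫ x in (0+(1:ℝ))..((j:ℝ)+1), x⁻¹ :=
    intervalIntegral.integral_comp_add_right (fun x => x⁻¹) 1
  rw [this, zero_add, integral_inv_of_pos one_pos (by linarith), div_one]

lemma integral_I2 (j : ℕ) :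
    (∫ x in Ioi (j:ℝ), ((x + 1) ^ 3)⁻¹ = 1 / (2 * ((j:ℝ) + 1) ^ 2)) ∧
      IntegrableOn (fun x => ((x + 1) ^ 3)⁻¹) (Ioi (j:ℝ)) := by
  have hj0 : (0:ℝ) ≤ j := Nat.cast_nonneg j
  have hderiv : ∀ x ∈ Ici (j:ℝ), HasDerivAt (fun x : ℝ => -((x + 1) ^ 2)⁻¹ / 2)
      (((x + 1) ^ 3)⁻¹) x := by
    intro x hx
    have hx1 : (0:ℝ) < x + 1 := by
      simp only [mem_Ici] at hx; linarith
    have h1 : HasDerivAt (fun y : ℝ => y + 1) 1 x := (hasDerivAt_id x).add_const 1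
    have h2 : HasDerivAt (fun y : ℝ => (y + 1) ^ 2) (2 * (x + 1)) x := by
      simpa using h1.fun_pow 2
    have h3 := (h2.fun_inv (by positivity)).fun_neg.div_const 2
    refine h3.congr_deriv ?_
    have hne : x + 1 ≠ 0 := hx1.ne'
    field_simp
  have hpos : ∀ x ∈ Ioi (j:ℝ), 0 ≤ ((x + 1) ^ 3)⁻¹ := by
    intro x hx
    have : (0:ℝ) < x + 1 := by simp only [mem_Ioi] at hx; linarith
    positivity
  have htend : Tendsto (fun x : ℝ => -((x + 1) ^ 2)⁻¹ / 2) atTop (nhds 0) := by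
    have h1 : Tendsto (fun x : ℝ => (x + 1) ^ 2) atTop atTop :=
      (tendsto_pow_atTop (two_ne_zero)).comp (tendsto_atTop_add_const_right atTop 1 tendsto_id)
    have := (h1.inv_tendsto_atTop).neg.div_const 2
    simpa using this
  constructor
  · rw [integral_Ioi_of_hasDerivAt_of_nonneg' hderiv hpos htend]
    field_simp; ring
  · exact integrableOn_Ioi_deriv_of_nonneg' hderiv hpos htend

set_option maxHeartbeats 1000000 in
/-- `∫_0^∞ k_j(g)²/(g+1) dg ≤ 2 log(1+j)`. -/
theorem integral_kfun_sq_div (j : ℕ) (hj : 1 ≤ j) :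
    (∫ g in Ioi (0 : ℝ), (kfun j g) ^ 2 / (g + 1)) ≤ 2 * Real.log (1 + (j : ℝ)) := by
  have hj1 : (1:ℝ) ≤ j := by exact_mod_cast hj
  have hj0 : (0:ℝ) ≤ j := by linarith
  set L := Real.log (1 + (j : ℝ)) with hLdef
  clear_value L
  have hL : 0 < L := by rw [hLdef]; exact Real.log_pos (by linarith)
  set h : ℝ → ℝ := fun g => (kfun j g) ^ 2 / (g + 1) with hdef
  clear_value h
  -- measurability
  have hmeas : Measurable h := by
    simp only [hdef, kfun]
    measurability
  -- continuity on Icc 0 j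
  have hcont : ContinuousOn h (Icc (0:ℝ) (j:ℝ)) := by
    simp only [hdef, kfun]
    apply ContinuousOn.div
    · apply ContinuousOn.pow
      apply continuousOn_const.sub
      apply ContinuousOn.div
      · exact ((continuous_id.add continuous_const).continuousOn).log
          (fun x hx => by have := hx.1; simp only [Pi.add_apply, id]; positivity)
      · exact (((continuous_id.add continuous_const).add continuous_const).continuousOn).log
          (fun x hx => by have := hx.1; simp only [Pi.add_apply, id]; positivity)
      · intro x hx
        have hx0 := hx.1
        have : 0 < Real.log (x + 1 + (j:ℝ)) :=
          lt_of_lt_of_le (Real.log_pos (by norm_num)) (logD_pos j hj hx0)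
        exact ne_of_gt this
    · exact (continuous_id.add continuous_const).continuousOn
    · intro x hx; have := hx.1; positivity
  -- integrability on Ioc 0 j
  have hint1 : IntegrableOn h (Ioc (0:ℝ) (j:ℝ)) :=
    (hcont.integrableOn_Icc).mono_set Ioc_subset_Icc_self
  -- the comparison function on Ioi j
  have hbig : IntegrableOn (fun x : ℝ => (j:ℝ)^2 / L^2 * ((x + 1) ^ 3)⁻¹) (Ioi (j:ℝ)) :=
    ((integral_I2 j).2).const_mul _
  -- pointwise bound on Ioi j
  have hbound2 : ∀ x ∈ Ioi (j:ℝ), h x ≤ (j:ℝ)^2 / L^2 * ((x + 1) ^ 3)⁻¹ := by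
    intro x hx
    have hx0 : (0:ℝ) ≤ x := by simp only [mem_Ioi] at hx; linarith
    have hx1 : (0:ℝ) < x + 1 := by linarith
    have hk0 := kfun_nonneg j hj hx0
    have hk := kfun_le j hj hx0
    rw [← hLdef] at hk
    calc h x ≤ ((j:ℝ) / ((x + 1) * L)) ^ 2 / (x + 1) := by
          simp only [hdef]; gcongr
      _ = (j:ℝ)^2 / L^2 * ((x + 1) ^ 3)⁻¹ := by
          field_simp
  -- integrability on Ioi j
  have hnonneg : ∀ x ∈ Ioi (0:ℝ), 0 ≤ h x := by
    intro x hx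
    have hx0 : (0:ℝ) ≤ x := le_of_lt hx
    simp only [hdef]
    exact div_nonneg (sq_nonneg _) (by linarith)
  have hint2 : IntegrableOn h (Ioi (j:ℝ)) := by
    apply Integrable.mono' hbig hmeas.aestronglyMeasurable.restrict
    filter_upwards [ae_restrict_mem measurableSet_Ioi] with x hx
    rw [Real.norm_eq_abs, abs_of_nonneg (hnonneg x (by simp only [mem_Ioi] at hx ⊢; linarith))]
    exact hbound2 x hx
  -- split the integral
  have hsplit : Ioc (0:ℝ) (j:ℝ) ∪ Ioi (j:ℝ) = Ioi (0:ℝ) := Ioc_union_Ioi_eq_Ioi hj0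
  rw [← hsplit, setIntegral_union (Ioc_disjoint_Ioi le_rfl) measurableSet_Ioi hint1 hint2]
  -- bound the first piece
  have hinv : IntegrableOn (fun x : ℝ => (x + 1)⁻¹) (Ioc (0:ℝ) (j:ℝ)) := by
    apply ContinuousOn.integrableOn_Icc ?_ |>.mono_set Ioc_subset_Icc_self
    exact ((continuous_id.add continuous_const).continuousOn).inv₀
      (fun x hx => by have := hx.1; simp only [Pi.add_apply, id]; positivity)
  have hb1 : (∫ x in Ioc (0:ℝ) (j:ℝ), h x) ≤ Real.log ((j:ℝ) + 1) := by
    rw [← integral_I1 j]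
    apply setIntegral_mono_on hint1 hinv measurableSet_Ioc
    intro x hx
    have hx0 : (0:ℝ) ≤ x := le_of_lt hx.1
    have hx1 : (0:ℝ) < x + 1 := by linarith
    have hk0 := kfun_nonneg j hj hx0
    have hk1 := kfun_le_one j hj hx0
    have hsq : (kfun j x) ^ 2 ≤ 1 := by nlinarith
    calc h x ≤ 1 / (x + 1) := by
          simp only [hdef]; gcongr
      _ = (x + 1)⁻¹ := one_div _
  -- bound the second piece
  have hb2 : (∫ x in Ioi (j:ℝ), h x) ≤ (j:ℝ)^2 / L^2 * (1 / (2 * ((j:ℝ) + 1) ^ 2)) := by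
    calc (∫ x in Ioi (j:ℝ), h x)
        ≤ ∫ x in Ioi (j:ℝ), (j:ℝ)^2 / L^2 * ((x + 1) ^ 3)⁻¹ :=
          setIntegral_mono_on hint2 hbig measurableSet_Ioi hbound2
      _ = (j:ℝ)^2 / L^2 * (1 / (2 * ((j:ℝ) + 1) ^ 2)) := by
          rw [integral_const_mul, (integral_I2 j).1]
  -- final arithmetic
  have hLL : Real.log ((j:ℝ) + 1) = L := by rw [hLdef, add_comm]
  have hkey : (j:ℝ)^2 ≤ 2 * L^3 * ((j:ℝ) + 1)^2 := by
    rcases Nat.lt_or_ge j 2 with hcase | hcase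
    · have hj1' : j = 1 := by omega
      subst hj1'
      have h2 : (0.6931471803 : ℝ) < Real.log 2 := Real.log_two_gt_d9
      have : L = Real.log 2 := by rw [hLdef]; norm_num
      rw [this]
      have h3 : ((1:ℝ)/2)^3 ≤ (Real.log 2)^3 :=
        pow_le_pow_left₀ (by norm_num) (by linarith) 3
      push_cast
      norm_num at h3 ⊢
      nlinarith [h3]
    · have hj2 : (2:ℝ) ≤ j := by exact_mod_cast hcase
      have hL1 : 1 ≤ L := by
        rw [hLdef, Real.le_log_iff_exp_le (by linarith)]
        have := Real.exp_one_lt_d9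
        linarith
      have hL3 : 1 ≤ L^3 := one_le_pow₀ hL1
      calc (j:ℝ)^2 ≤ ((j:ℝ) + 1)^2 := by
            apply pow_le_pow_left₀ hj0 (by linarith)
        _ = 1 * ((j:ℝ) + 1)^2 := (one_mul _).symm
        _ ≤ (2 * L^3) * ((j:ℝ) + 1)^2 :=
            mul_le_mul_of_nonneg_right (by linarith) (sq_nonneg _)
  have hfin : (j:ℝ)^2 / L^2 * (1 / (2 * ((j:ℝ) + 1) ^ 2)) ≤ L := by
    have hLne : L ≠ 0 := ne_of_gt hL
    have hj1ne : ((j:ℝ) + 1) ≠ 0 := by linarith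
    have heq : (j:ℝ)^2 / L^2 * (1 / (2 * ((j:ℝ) + 1) ^ 2))
        = (j:ℝ)^2 / (2 * L^2 * ((j:ℝ) + 1)^2) := by
      field_simp
    rw [heq, div_le_iff₀ (by positivity)]
    calc (j:ℝ)^2 ≤ 2 * L^3 * ((j:ℝ) + 1)^2 := hkey
      _ = L * (2 * L^2 * ((j:ℝ) + 1)^2) := by ring
  linarith [hb1, hb2, hfin]
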